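/- (Lemma 1) For every L ≥ 0 and every query index ω ∈ {1,…,n}, | r_ω + γ Σ_{j=1}^n P_{ωj} TF_L(Z_0(j); θ_L^TD) − TF_L(Z_0(ω); θ_L^TD) | ≤ ‖r‖_∞ γ^L; that is, the absolute value of the expected TD error of the depth-L Transformer with TD parameters is at most ‖r‖_∞ γ^L. -/

import Mathlib

open Matrix Filter Topology

noncomputable section

/-- Index type for `2n` rows (two stacked copies of the feature dimension). -/
abbrev TwoN (n : ℕ) := Fin n ⊕ Fin n
/-- Row index type for prompts: `2n + 1`. -/
abbrev RIdx (n : ℕ) := TwoN n ⊕ Unit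
/-- Column index type for prompts: `n + 1` (context columns plus the query column). -/
abbrev CIdx (n : ℕ) := Fin n ⊕ Unit

/-- The mask `M = [[I_n, 0],[0, 0]]`. -/
def maskM (n : ℕ) : Matrix (CIdx n) (CIdx n) ℝ := Matrix.fromBlocks 1 0 0 0

/-- One linear attention layer `Z ↦ Z + P̃ Z M (Zᵀ Q̃ Z)`. -/
def attnLayer (n : ℕ) (Pm Qm : Matrix (RIdx n) (RIdx n) ℝ)
    (Z : Matrix (RIdx n) (CIdx n) ℝ) : Matrix (RIdx n) (CIdx n) ℝ :=
  Z + Pm * Z * maskM n * (Zᵀ * Qm * Z)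

/-- `P̃ = [[0, 0],[u, 1]]`. -/
def Pmat (n : ℕ) (u : Matrix Unit (TwoN n) ℝ) : Matrix (RIdx n) (RIdx n) ℝ :=
  Matrix.fromBlocks 0 0 u 1

/-- `Q̃ = [[A, 0],[0, 0]]`. -/
def Qmat (n : ℕ) (A : Matrix (TwoN n) (TwoN n) ℝ) : Matrix (RIdx n) (RIdx n) ℝ :=
  Matrix.fromBlocks A 0 0 0

/-- `A^TD = [[-I, I],[0, 0]]`. -/
def Atd (n : ℕ) : Matrix (TwoN n) (TwoN n) ℝ := Matrix.fromBlocks (-1) 1 0 0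

/-- A row-stochastic matrix. -/
def RowStochastic {n : ℕ} (P : Matrix (Fin n) (Fin n) ℝ) : Prop :=
  (∀ i k, 0 ≤ P i k) ∧ ∀ i, ∑ k, P i k = 1

/-- TD iterates `w_0 = 0`, `w_{l+1} = r + γ P w_l`. -/
def tdW {n : ℕ} (γ : ℝ) (P : Matrix (Fin n) (Fin n) ℝ) (r : Fin n → ℝ) : ℕ → Fin n → ℝ
  | 0 => 0
  | l + 1 => r + γ • P.mulVec (tdW γ P r l)

/-- The value vector `v = (I - γ P)⁻¹ r`. -/
def valueV {n : ℕ} (γ : ℝ) (P : Matrix (Fin n) (Fin n) ℝ) (r : Fin n → ℝ) : Fin n → ℝ :=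
  ((1 : Matrix (Fin n) (Fin n) ℝ) - γ • P)⁻¹.mulVec r

/-- The prompt `Z_0(j)`: the `i`-th column is `(e_i, γ Pᵀ e_i, r_i)` and the query
column is `(e_j, 0, 0)`. -/
def prompt {n : ℕ} (γ : ℝ) (P : Matrix (Fin n) (Fin n) ℝ) (r : Fin n → ℝ) (j : Fin n) :
    Matrix (RIdx n) (CIdx n) ℝ := fun p q =>
  match p, q with
  | Sum.inl (Sum.inl k), Sum.inl i => if k = i then 1 else 0
  | Sum.inl (Sum.inr k), Sum.inl i => γ * P i k
  | Sum.inr _, Sum.inl i => r i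
  | Sum.inl (Sum.inl k), Sum.inr _ => if k = j then 1 else 0
  | Sum.inl (Sum.inr _), Sum.inr _ => 0
  | Sum.inr _, Sum.inr _ => 0

/-- Embeddings `Z_l` of the looped transformer with shared parameters `(A, u)`,
starting from the prompt `Z_0(j)`. -/
def embed {n : ℕ} (γ : ℝ) (P : Matrix (Fin n) (Fin n) ℝ) (r : Fin n → ℝ) (j : Fin n)
    (A : Matrix (TwoN n) (TwoN n) ℝ) (u : Matrix Unit (TwoN n) ℝ) :
    ℕ → Matrix (RIdx n) (CIdx n) ℝ
  | 0 => prompt γ P r j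
  | l + 1 => attnLayer n (Pmat n u) (Qmat n A) (embed γ P r j A u l)

/-- Looped `L`-layer transformer output `F_L^{(j)}(A, u) = -(Z_L)_{2n+1, n+1}`. -/
def tfOut {n : ℕ} (γ : ℝ) (P : Matrix (Fin n) (Fin n) ℝ) (r : Fin n → ℝ) (j : Fin n)
    (A : Matrix (TwoN n) (TwoN n) ℝ) (u : Matrix Unit (TwoN n) ℝ) (L : ℕ) : ℝ :=
  -(embed γ P r j A u L (Sum.inr ()) (Sum.inr ()))

/-- `TF_L(Z_0(j); θ_L^TD)`: the transformer output with the TD parameters. -/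
def tfTD {n : ℕ} (γ : ℝ) (P : Matrix (Fin n) (Fin n) ℝ) (r : Fin n → ℝ) (j : Fin n) (L : ℕ) : ℝ :=
  tfOut γ P r j (Atd n) 0 L

/-- `X ∈ ℝ^{2n×n}`: the `i`-th column is `(e_i, γ Pᵀ e_i)`. -/
def Xmat {n : ℕ} (γ : ℝ) (P : Matrix (Fin n) (Fin n) ℝ) : Matrix (TwoN n) (Fin n) ℝ :=
  fun p i => match p with
  | Sum.inl k => if k = i then 1 else 0
  | Sum.inr k => γ * P i k

/-- The query vector `x^q = (e_ω, 0) ∈ ℝ^{2n}`. -/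
def xqv {n : ℕ} (ω : Fin n) : TwoN n → ℝ := fun p =>
  match p with
  | Sum.inl k => if k = ω then 1 else 0
  | Sum.inr _ => 0

/-- Operator norm induced by the ℓ1 vector norm: maximum absolute column sum. -/
def matL1 {m k : Type*} [Fintype m] [Fintype k] (B : Matrix m k ℝ) : ℝ :=
  ⨆ j, ∑ i, |B i j|

/-- `G_0^{(i)} = 0`, `G_{l+1}^{(i)} = X (r - w_l) (X e_i)ᵀ + γ Σ_j P_{ij} G_l^{(j)}`. -/
def Gseq {n : ℕ} (γ : ℝ) (P : Matrix (Fin n) (Fin n) ℝ) (r : Fin n → ℝ) :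
    ℕ → Fin n → Matrix (TwoN n) (TwoN n) ℝ
  | 0 => fun _ => 0
  | l + 1 => fun i =>
      Matrix.vecMulVec ((Xmat γ P).mulVec (r - tdW γ P r l)) ((Xmat γ P).mulVec (Pi.single i 1))
        + γ • ∑ j, P i j • Gseq γ P r l j

/-- `H_0 = 0`, `H_{l+1} = H_l + X (r - w_l) (x^q)ᵀ - G_l^{(ω)}`. -/
def Hseq {n : ℕ} (γ : ℝ) (P : Matrix (Fin n) (Fin n) ℝ) (r : Fin n → ℝ) (ω : Fin n) :
    ℕ → Matrix (TwoN n) (TwoN n) ℝ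
  | 0 => 0
  | l + 1 => Hseq γ P r ω l
      + Matrix.vecMulVec ((Xmat γ P).mulVec (r - tdW γ P r l)) (xqv ω)
      - Gseq γ P r l ω

/-- `U_0 = 0`, `U_{l+1} = X Xᵀ A^TD X + γ U_l Pᵀ`. -/
def Useq {n : ℕ} (γ : ℝ) (P : Matrix (Fin n) (Fin n) ℝ) : ℕ → Matrix (TwoN n) (Fin n) ℝ
  | 0 => 0
  | l + 1 => Xmat γ P * (Xmat γ P)ᵀ * Atd n * Xmat γ P + γ • (Useq γ P l * Pᵀ)

/-- `h_0 = 0`, `h_{l+1} = h_l + X Xᵀ A^TD x^q + U_l Xᵀ A^TD x^q`. -/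
def hseq {n : ℕ} (γ : ℝ) (P : Matrix (Fin n) (Fin n) ℝ) (ω : Fin n) : ℕ → TwoN n → ℝ
  | 0 => 0
  | l + 1 => hseq γ P ω l
      + (Xmat γ P * (Xmat γ P)ᵀ * Atd n).mulVec (xqv ω)
      + (Useq γ P l * (Xmat γ P)ᵀ * Atd n).mulVec (xqv ω)

/-- `g_L(j)`: the vector of all partial derivatives of `F_L^{(j)}` with respect to the
entries of `A` and of `u`, evaluated at the TD parameters `(A^TD, 0)`. -/
def gvec {n : ℕ} (γ : ℝ) (P : Matrix (Fin n) (Fin n) ℝ) (r : Fin n → ℝ) (L : ℕ) (j : Fin n) :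
    (TwoN n × TwoN n) ⊕ TwoN n → ℝ
  | Sum.inl ab => deriv (fun t : ℝ =>
      tfOut γ P r j (Atd n + t • Matrix.single ab.1 ab.2 1) 0 L) 0
  | Sum.inr k => deriv (fun t : ℝ =>
      tfOut γ P r j (Atd n) (t • Matrix.single () k 1) L) 0



/-- The "bottom context row" sequence: `b_0 = r`, `b_{l+1} = γ P b_l`. -/
def bcol {n : ℕ} (γ : ℝ) (P : Matrix (Fin n) (Fin n) ℝ) (r : Fin n → ℝ) : ℕ → Fin n → ℝ
  | 0 => r
  | l + 1 => γ • P.mulVec (bcol γ P r l)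

lemma tdW_succ' {n : ℕ} (γ : ℝ) (P : Matrix (Fin n) (Fin n) ℝ) (r : Fin n → ℝ) (l : ℕ) :
    tdW γ P r (l + 1) = tdW γ P r l + bcol γ P r l := by
  induction l with
  | zero => simp [tdW, bcol]
  | succ l ih =>
      show r + γ • P.mulVec (tdW γ P r (l+1)) = tdW γ P r (l+1) + γ • P.mulVec (bcol γ P r l)
      conv_lhs => rw [ih]
      rw [Matrix.mulVec_add, smul_add]
      show r + (γ • P.mulVec (tdW γ P r l) + γ • P.mulVec (bcol γ P r l))
        = (r + γ • P.mulVec (tdW γ P r l)) + γ • P.mulVec (bcol γ P r l)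
      abel

/-- Explicit form of the embeddings under TD parameters. -/
def Zexp {n : ℕ} (γ : ℝ) (P : Matrix (Fin n) (Fin n) ℝ) (r : Fin n → ℝ) (j : Fin n) (L : ℕ) :
    Matrix (RIdx n) (CIdx n) ℝ := fun p q =>
  match p, q with
  | Sum.inl (Sum.inl k), Sum.inl i => if k = i then 1 else 0
  | Sum.inl (Sum.inr k), Sum.inl i => γ * P i k
  | Sum.inr _, Sum.inl i => bcol γ P r L i
  | Sum.inl (Sum.inl k), Sum.inr _ => if k = j then 1 else 0
  | Sum.inl (Sum.inr _), Sum.inr _ => 0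
  | Sum.inr _, Sum.inr _ => -(tdW γ P r L j)

lemma attn_step {n : ℕ} (γ : ℝ) (P : Matrix (Fin n) (Fin n) ℝ) (r : Fin n → ℝ) (j : Fin n)
    (l : ℕ) :
    attnLayer n (Pmat n 0) (Qmat n (Atd n)) (Zexp γ P r j l) = Zexp γ P r j (l + 1) := by
  funext p q
  rw [attnLayer, Matrix.add_apply]
  rcases p with (p | p) | u
  · have hz : ∀ q', (Pmat n 0 * Zexp γ P r j l * maskM n * ((Zexp γ P r j l)ᵀ * Qmat n (Atd n) * Zexp γ P r j l)) (Sum.inl (Sum.inl p)) q' = 0 := by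
      intro q'
      simp [Matrix.mul_apply, Pmat, Matrix.fromBlocks]
    rw [hz]
    cases q <;> simp [Zexp]
  · have hz : ∀ q', (Pmat n 0 * Zexp γ P r j l * maskM n * ((Zexp γ P r j l)ᵀ * Qmat n (Atd n) * Zexp γ P r j l)) (Sum.inl (Sum.inr p)) q' = 0 := by
      intro q'
      simp [Matrix.mul_apply, Pmat, Matrix.fromBlocks]
    rw [hz]
    cases q <;> simp [Zexp]
  · cases q with
    | inl i =>
        simp [Matrix.mul_apply, Pmat, Qmat, maskM, Atd, Matrix.fromBlocks, Fintype.sum_sum_type, Zexp, Matrix.one_apply]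
        have hsplit : ∑ x, bcol γ P r l x * ((-if i = x then (1:ℝ) else 0) + γ * P i x)
            = (∑ x, bcol γ P r l x * (-if i = x then (1:ℝ) else 0))
              + ∑ x, bcol γ P r l x * (γ * P i x) := by
          rw [← Finset.sum_add_distrib]; apply Finset.sum_congr rfl; intros; ring
        rw [hsplit]
        have h1 : ∑ x, bcol γ P r l x * (-if i = x then (1:ℝ) else 0) = -(bcol γ P r l i) := by
          simp
        have h2 : ∑ x, bcol γ P r l x * (γ * P i x) = γ * ∑ x, P i x * bcol γ P r l x := by
          rw [Finset.mul_sum]; apply Finset.sum_congr rfl; intros; ring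
        rw [h1, h2]
        simp [bcol, Matrix.mulVec, dotProduct]
    | inr _ =>
        simp [Matrix.mul_apply, Pmat, Qmat, maskM, Atd, Matrix.fromBlocks, Fintype.sum_sum_type, Zexp, Matrix.one_apply]
        rw [tdW_succ', Pi.add_apply]
        ring

lemma embed_eq {n : ℕ} (γ : ℝ) (P : Matrix (Fin n) (Fin n) ℝ) (r : Fin n → ℝ) (j : Fin n)
    (L : ℕ) : embed γ P r j (Atd n) 0 L = Zexp γ P r j L := by
  induction L with
  | zero =>
      funext p q
      rcases p with (p | p) | u <;> rcases q with i | v <;>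
        simp [embed, prompt, Zexp, bcol, tdW]
  | succ L ih =>
      show attnLayer n (Pmat n 0) (Qmat n (Atd n)) (embed γ P r j (Atd n) 0 L) = _
      rw [ih, attn_step]

lemma tfTD_eq {n : ℕ} (γ : ℝ) (P : Matrix (Fin n) (Fin n) ℝ) (r : Fin n → ℝ) (j : Fin n)
    (L : ℕ) : tfTD γ P r j L = tdW γ P r L j := by
  rw [tfTD, tfOut, embed_eq]
  simp [Zexp]

lemma bcol_bound {n : ℕ} (γ : ℝ) (hγ0 : 0 ≤ γ) (P : Matrix (Fin n) (Fin n) ℝ)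
    (hP : RowStochastic P) (r : Fin n → ℝ) (L : ℕ) (ω : Fin n) :
    |bcol γ P r L ω| ≤ ‖r‖ * γ ^ L := by
  induction L generalizing ω with
  | zero =>
      simpa [bcol] using (norm_le_pi_norm r ω)
  | succ L ih =>
      have hb : bcol γ P r (L + 1) ω = γ * ∑ x, P ω x * bcol γ P r L x := by
        simp [bcol, Matrix.mulVec, dotProduct]
      rw [hb, abs_mul, abs_of_nonneg hγ0]
      have h1 : |∑ x, P ω x * bcol γ P r L x| ≤ ∑ x, P ω x * (‖r‖ * γ ^ L) := by
        refine (Finset.abs_sum_le_sum_abs _ _).trans (Finset.sum_le_sum fun x _ => ?_)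
        rw [abs_mul, abs_of_nonneg (hP.1 ω x)]
        exact mul_le_mul_of_nonneg_left (ih x) (hP.1 ω x)
      have h2 : ∑ x, P ω x * (‖r‖ * γ ^ L) = ‖r‖ * γ ^ L := by
        rw [← Finset.sum_mul, hP.2 ω, one_mul]
      calc γ * |∑ x, P ω x * bcol γ P r L x| ≤ γ * (‖r‖ * γ ^ L) := by
            rw [← h2]; exact mul_le_mul_of_nonneg_left h1 hγ0
        _ = ‖r‖ * γ ^ (L + 1) := by ring

/-- Lemma 1: the expected TD error of the depth-L transformer with
TD parameters is bounded by `‖r‖_∞ γ^L`. -/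
theorem stmt5 (n : ℕ) (hn : 1 ≤ n) (γ : ℝ) (hγ0 : 0 ≤ γ) (hγ1 : γ < 1)
    (P : Matrix (Fin n) (Fin n) ℝ) (hP : RowStochastic P) (r : Fin n → ℝ)
    (L : ℕ) (ω : Fin n) :
    |r ω + γ * (∑ j, P ω j * tfTD γ P r j L) - tfTD γ P r ω L| ≤ ‖r‖ * γ ^ L := by
  have key : r ω + γ * (∑ j, P ω j * tfTD γ P r j L) - tfTD γ P r ω L = bcol γ P r L ω := by
    simp only [tfTD_eq]
    have h1 : r ω + γ * (∑ j, P ω j * tdW γ P r L j) = tdW γ P r (L + 1) ω := by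
      simp [tdW, Matrix.mulVec, dotProduct]
    rw [h1, tdW_succ', Pi.add_apply]
    ring
  rw [key]
  exact bcol_bound γ hγ0 P hP r L ω

end
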